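/- For an integer m ≥ 3, let Ω denote the m × m real matrix with rows and columns indexed by 0, 1, …, m−1, whose entries are: Ω(0,1) = 2; Ω(i,j) = 1 whenever |i − j| = 1 and (i,j) ≠ (0,1); Ω(m−1,0) = 1; and all other entries equal 0. Let λ, q₁, q₂ ∈ ℂ satisfy q₁ + q₂ = λ, q₁·q₂ = 1, q₁ ≠ q₂, and q₁^m + q₂^m ≠ 2. Then for any vectors x, f ∈ ℂ^m with (Ω − λI)x = f, one has x₀ = [ (q₁^m − q₂^m)·f₀ + 2·Σ_{p=1}^{m−1} (q₁^{m−p} − q₂^{m−p})·f_p ] / ( (q₁ − q₂)(2 − q₁^m − q₂^m) ). -/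

import Mathlib

open scoped BigOperators

/-- The `m × m` comparison matrix `Ω`: `Ω 0 1 = 2`, `Ω i j = 1` when `|i − j| = 1`
and `(i,j) ≠ (0,1)`, `Ω (m−1) 0 = 1`, all other entries `0`. -/
def OmegaMat (m : ℕ) : Matrix (Fin m) (Fin m) ℝ := fun i j =>
  if i.val = 0 ∧ j.val = 1 then 2
  else if i.val + 1 = j.val ∨ j.val + 1 = i.val then 1
  else if i.val = m - 1 ∧ j.val = 0 then 1
  else 0

noncomputable def sAux (q₁ q₂ : ℂ) (n : ℕ) : ℂ := q₁ ^ n - q₂ ^ n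

noncomputable def cAux (m : ℕ) (q₁ q₂ : ℂ) (p : Fin m) : ℂ :=
  if p.val = 0 then sAux q₁ q₂ m else 2 * sAux q₁ q₂ (m - p.val)

lemma sum_val_eq {m : ℕ} (k : ℕ) (hk : k < m) (g : Fin m → ℂ) :
    (∑ p : Fin m, if p.val = k then g p else 0) = g ⟨k, hk⟩ := by
  rw [Finset.sum_eq_single (⟨k, hk⟩ : Fin m)]
  · simp
  · intro b _ hb
    rw [if_neg]
    simpa [Fin.ext_iff] using hb
  · simp

lemma entryA (m : ℕ) (lam : ℂ) (p j : Fin m) :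
    (((OmegaMat m).map (fun r : ℝ => (r : ℂ))) - lam • 1) p j =
      (if p.val = 0 ∧ j.val = 1 then 2
       else if p.val + 1 = j.val ∨ j.val + 1 = p.val then 1
       else if p.val = m - 1 ∧ j.val = 0 then 1 else (0 : ℂ))
      - (if p.val = j.val then lam else 0) := by
  rw [Matrix.sub_apply, Matrix.map_apply]
  congr 1
  · simp only [OmegaMat]
    split_ifs <;> norm_num
  · rw [Matrix.smul_apply, Matrix.one_apply]
    by_cases h : p = j
    · rw [if_pos h, if_pos (by rw [h])]; simp
    · rw [if_neg h, if_neg (fun hv => h (Fin.ext hv))]; simp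

lemma keyLem (n : ℕ) (q₁ q₂ : ℂ) (hprod : q₁ * q₂ = 1) (j : Fin (n + 3)) :
    (∑ p : Fin (n + 3), cAux (n + 3) q₁ q₂ p *
      ((((OmegaMat (n + 3)).map (fun r : ℝ => (r : ℂ))) - (q₁ + q₂) • 1) p j)) =
    if j.val = 0 then (q₁ - q₂) * (2 - q₁ ^ (n + 3) - q₂ ^ (n + 3)) else 0 := by
  obtain ⟨jv, hj⟩ := j
  simp only
  by_cases h0 : jv = 0
  · subst h0
    rw [if_pos rfl]
    have claim : ∀ p : Fin (n + 3), cAux (n + 3) q₁ q₂ p *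
        ((((OmegaMat (n + 3)).map (fun r : ℝ => (r : ℂ))) - (q₁ + q₂) • 1) p ⟨0, hj⟩) =
        ((if p.val = 1 then cAux (n + 3) q₁ q₂ p else 0)
        + (if p.val = n + 2 then cAux (n + 3) q₁ q₂ p else 0))
        + (if p.val = 0 then -((q₁ + q₂) * cAux (n + 3) q₁ q₂ p) else 0) := by
      intro p
      rw [entryA]
      obtain ⟨pv, hp⟩ := p
      simp only
      split_ifs <;> first | ring1 | omega | (exfalso; omega) | (exfalso; simp_all) | (exfalso; simp_all; omega)
    rw [Finset.sum_congr rfl (fun p _ => claim p), Finset.sum_add_distrib,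
      Finset.sum_add_distrib, sum_val_eq 1 (by omega), sum_val_eq (n + 2) (by omega),
      sum_val_eq 0 (by omega)]
    have e1 : n + 3 - 1 = n + 2 := by omega
    have e2 : n + 3 - (n + 2) = 1 := by omega
    simp only [cAux, sAux, e1, e2, eq_self_iff_true, if_true, if_pos rfl, if_neg (by omega : ¬(1 : ℕ) = 0),
      if_neg (by omega : ¬n + 2 = 0)]
    linear_combination (2 * q₂ ^ (n + 2) - 2 * q₁ ^ (n + 2)) * hprod
  · by_cases h1 : jv = 1
    · subst h1
      rw [if_neg (by omega)]
      have claim : ∀ p : Fin (n + 3), cAux (n + 3) q₁ q₂ p *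
          ((((OmegaMat (n + 3)).map (fun r : ℝ => (r : ℂ))) - (q₁ + q₂) • 1) p ⟨1, hj⟩) =
          ((if p.val = 0 then 2 * cAux (n + 3) q₁ q₂ p else 0)
          + (if p.val = 2 then cAux (n + 3) q₁ q₂ p else 0))
          + (if p.val = 1 then -((q₁ + q₂) * cAux (n + 3) q₁ q₂ p) else 0) := by
        intro p
        rw [entryA]
        obtain ⟨pv, hp⟩ := p
        simp only
        split_ifs <;> first | ring1 | omega | (exfalso; omega) | (exfalso; simp_all) | (exfalso; simp_all; omega)
      rw [Finset.sum_congr rfl (fun p _ => claim p), Finset.sum_add_distrib,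
        Finset.sum_add_distrib, sum_val_eq 0 (by omega), sum_val_eq 2 (by omega),
        sum_val_eq 1 (by omega)]
      have e1 : n + 3 - 1 = n + 2 := by omega
      have e2 : n + 3 - 2 = n + 1 := by omega
      simp only [cAux, sAux, e1, e2, eq_self_iff_true, if_true, if_pos rfl, if_neg (by omega : ¬(1 : ℕ) = 0),
        if_neg (by omega : ¬(2 : ℕ) = 0)]
      linear_combination (2 * q₂ ^ (n + 1) - 2 * q₁ ^ (n + 1)) * hprod
    · by_cases h2 : jv = n + 2
      · subst h2
        rw [if_neg (by omega)]
        have claim : ∀ p : Fin (n + 3), cAux (n + 3) q₁ q₂ p *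
            ((((OmegaMat (n + 3)).map (fun r : ℝ => (r : ℂ))) - (q₁ + q₂) • 1) p ⟨n + 2, hj⟩) =
            (if p.val = n + 1 then cAux (n + 3) q₁ q₂ p else 0)
            + (if p.val = n + 2 then -((q₁ + q₂) * cAux (n + 3) q₁ q₂ p) else 0) := by
          intro p
          rw [entryA]
          obtain ⟨pv, hp⟩ := p
          simp only
          split_ifs <;> first | ring1 | omega | (exfalso; omega) | (exfalso; simp_all) | (exfalso; simp_all; omega)
        rw [Finset.sum_congr rfl (fun p _ => claim p), Finset.sum_add_distrib,
          sum_val_eq (n + 1) (by omega), sum_val_eq (n + 2) (by omega)]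
        have e1 : n + 3 - (n + 1) = 2 := by omega
        have e2 : n + 3 - (n + 2) = 1 := by omega
        simp only [cAux, sAux, e1, e2, if_neg (by omega : ¬n + 1 = 0),
          if_neg (by omega : ¬n + 2 = 0)]
        ring
      · -- interior: 2 ≤ jv ≤ n + 1
        rw [if_neg h0]
        have claim : ∀ p : Fin (n + 3), cAux (n + 3) q₁ q₂ p *
            ((((OmegaMat (n + 3)).map (fun r : ℝ => (r : ℂ))) - (q₁ + q₂) • 1) p ⟨jv, hj⟩) =
            ((if p.val = jv - 1 then cAux (n + 3) q₁ q₂ p else 0)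
            + (if p.val = jv + 1 then cAux (n + 3) q₁ q₂ p else 0))
            + (if p.val = jv then -((q₁ + q₂) * cAux (n + 3) q₁ q₂ p) else 0) := by
          intro p
          rw [entryA]
          obtain ⟨pv, hp⟩ := p
          simp only
          split_ifs <;> first | ring1 | omega | (exfalso; omega) | (exfalso; simp_all) | (exfalso; simp_all; omega)
        rw [Finset.sum_congr rfl (fun p _ => claim p), Finset.sum_add_distrib,
          Finset.sum_add_distrib, sum_val_eq (jv - 1) (by omega), sum_val_eq (jv + 1) (by omega),
          sum_val_eq jv (by omega)]
        obtain ⟨e, he⟩ : ∃ e, n + 3 - (jv - 1) = e + 3 ∧ n + 3 - (jv + 1) = e + 1 ∧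
            n + 3 - jv = e + 2 := ⟨n + 1 - jv, by omega⟩
        simp only [cAux, sAux, he.1, he.2.1, he.2.2, if_neg (by omega : ¬jv - 1 = 0),
          if_neg (by omega : ¬jv + 1 = 0), if_neg h0]
        linear_combination (2 * q₂ ^ (e + 1) - 2 * q₁ ^ (e + 1)) * hprod

/-- If `q₁ + q₂ = λ`, `q₁ q₂ = 1`, `q₁ ≠ q₂`, `q₁^m + q₂^m ≠ 2`, and
`(Ω − λI)x = f`, then `x₀` is given by the explicit resolvent formula. -/
theorem stmt4 (m : ℕ) (hm : 3 ≤ m) (lam q₁ q₂ : ℂ)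
    (hsum : q₁ + q₂ = lam) (hprod : q₁ * q₂ = 1) (hne : q₁ ≠ q₂)
    (hm2 : q₁ ^ m + q₂ ^ m ≠ 2)
    (x f : Fin m → ℂ)
    (hxf : (((OmegaMat m).map (fun r : ℝ => (r : ℂ))) - lam • 1).mulVec x = f) :
    x ⟨0, by omega⟩ =
      ((q₁ ^ m - q₂ ^ m) * f ⟨0, by omega⟩ +
        2 * ∑ p ∈ Finset.univ.erase (⟨0, by omega⟩ : Fin m),
          (q₁ ^ (m - p.val) - q₂ ^ (m - p.val)) * f p) /
      ((q₁ - q₂) * (2 - q₁ ^ m - q₂ ^ m)) := by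
  subst hsum
  obtain ⟨n, rfl⟩ : ∃ n, m = n + 3 := ⟨m - 3, by omega⟩
  set A := (((OmegaMat (n + 3)).map (fun r : ℝ => (r : ℂ))) - (q₁ + q₂) • 1) with hA
  have hfp : ∀ p, f p = ∑ j, A p j * x j := by
    intro p
    rw [← hxf]
    rfl
  have hD : (q₁ - q₂) * (2 - q₁ ^ (n + 3) - q₂ ^ (n + 3)) ≠ 0 := by
    refine mul_ne_zero (sub_ne_zero.mpr hne) ?_
    intro h
    exact hm2 (by linear_combination -h)
  have hmain : (∑ p : Fin (n + 3), cAux (n + 3) q₁ q₂ p * f p) =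
      (q₁ - q₂) * (2 - q₁ ^ (n + 3) - q₂ ^ (n + 3)) * x ⟨0, by omega⟩ := by
    calc (∑ p : Fin (n + 3), cAux (n + 3) q₁ q₂ p * f p)
        = ∑ p : Fin (n + 3), ∑ j : Fin (n + 3), cAux (n + 3) q₁ q₂ p * (A p j * x j) := by
          simp only [hfp, Finset.mul_sum]
      _ = ∑ j : Fin (n + 3), ∑ p : Fin (n + 3), cAux (n + 3) q₁ q₂ p * (A p j * x j) :=
          Finset.sum_comm
      _ = ∑ j : Fin (n + 3), (∑ p : Fin (n + 3), cAux (n + 3) q₁ q₂ p * A p j) * x j := by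
          refine Finset.sum_congr rfl fun j _ => ?_
          rw [Finset.sum_mul]
          exact Finset.sum_congr rfl fun p _ => (mul_assoc _ _ _).symm
      _ = ∑ j : Fin (n + 3),
            (if j.val = 0 then ((q₁ - q₂) * (2 - q₁ ^ (n + 3) - q₂ ^ (n + 3))) * x j else 0) := by
          refine Finset.sum_congr rfl fun j _ => ?_
          rw [keyLem n q₁ q₂ hprod j]
          split_ifs <;> simp
      _ = (q₁ - q₂) * (2 - q₁ ^ (n + 3) - q₂ ^ (n + 3)) * x ⟨0, by omega⟩ :=
          sum_val_eq 0 (by omega) _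
  have hN : (q₁ ^ (n + 3) - q₂ ^ (n + 3)) * f ⟨0, by omega⟩ +
      2 * ∑ p ∈ Finset.univ.erase (⟨0, by omega⟩ : Fin (n + 3)),
        (q₁ ^ (n + 3 - p.val) - q₂ ^ (n + 3 - p.val)) * f p =
      ∑ p : Fin (n + 3), cAux (n + 3) q₁ q₂ p * f p := by
    rw [← Finset.add_sum_erase _ _ (Finset.mem_univ (⟨0, by omega⟩ : Fin (n + 3)))]
    have h0 : cAux (n + 3) q₁ q₂ ⟨0, by omega⟩ = q₁ ^ (n + 3) - q₂ ^ (n + 3) := by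
      simp [cAux, sAux]
    rw [h0, Finset.mul_sum]
    congr 1
    refine Finset.sum_congr rfl fun p hp => ?_
    have hp0 : ¬p.val = 0 := by
      intro h
      exact (Finset.ne_of_mem_erase hp) (Fin.ext h)
    simp only [cAux, sAux, if_neg hp0]
    ring
  rw [eq_div_iff hD, hN, hmain]
  ring
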